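/- The abscissa of convergence of the Dirichlet series Σ_{n=1}^∞ C(nk₂, nk₁) 3^{-k₂ns} (for coprime 0 < k₁ < k₂) equals (1/(k₂ log 3)) · [k₁ log(k₂/k₁) + (k₂−k₁) log(k₂/(k₂−k₁))], i.e., the normalized binary-entropy-type expression H(k₁/k₂)/log 3 where H(p) = −p log p − (1−p) log(1−p). -/

import Mathlib

open Finset

private def bt (N K j : ℕ) : ℕ := N.choose j * (K ^ j * (N - K) ^ (N - j))

private lemma bt_sum {N K : ℕ} (hK : K ≤ N) :
    ∑ j ∈ range (N + 1), bt N K j = N ^ N := by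
  have h : (K + (N - K)) = N := by omega
  calc ∑ j ∈ range (N + 1), bt N K j
      = ∑ j ∈ range (N + 1), K ^ j * (N - K) ^ (N - j) * N.choose j := by
        unfold bt; exact Finset.sum_congr rfl fun j _ => by ring
    _ = (K + (N - K)) ^ N := (add_pow K (N - K) N).symm
    _ = N ^ N := by rw [h]

private lemma bt_step_up {N K j : ℕ} (hKN : K < N) (hj : j < K) :
    bt N K j ≤ bt N K (j + 1) := by
  have hjN : j < N := hj.trans hKN
  have h1 : N - j = (N - (j + 1)) + 1 := by omega
  have key : bt N K j * (j + 1) ≤ bt N K (j + 1) * (j + 1) := by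
    unfold bt
    have e1 : N.choose (j + 1) * (K ^ (j + 1) * (N - K) ^ (N - (j + 1))) * (j + 1)
        = (N.choose j * (K ^ j * (N - K) ^ (N - (j + 1)))) * (K * (N - j)) := by
      rw [mul_right_comm, Nat.choose_succ_right_eq, pow_succ]
      ring
    have e2 : N.choose j * (K ^ j * (N - K) ^ (N - j)) * (j + 1)
        = (N.choose j * (K ^ j * (N - K) ^ (N - (j + 1)))) * ((j + 1) * (N - K)) := by
      rw [h1, pow_succ]; ring
    rw [e1, e2]
    exact Nat.mul_le_mul_left _ (Nat.mul_le_mul hj (Nat.sub_le_sub_left hj.le N))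
  exact Nat.le_of_mul_le_mul_right key (Nat.succ_pos j)

private lemma bt_step_down {N K j : ℕ} (hKj : K ≤ j) (hjN : j < N) :
    bt N K (j + 1) ≤ bt N K j := by
  have h1 : N - j = (N - (j + 1)) + 1 := by omega
  have key : bt N K (j + 1) * (j + 1) ≤ bt N K j * (j + 1) := by
    unfold bt
    have e1 : N.choose (j + 1) * (K ^ (j + 1) * (N - K) ^ (N - (j + 1))) * (j + 1)
        = (N.choose j * (K ^ j * (N - K) ^ (N - (j + 1)))) * (K * (N - j)) := by
      rw [mul_right_comm, Nat.choose_succ_right_eq, pow_succ]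
      ring
    have e2 : N.choose j * (K ^ j * (N - K) ^ (N - j)) * (j + 1)
        = (N.choose j * (K ^ j * (N - K) ^ (N - (j + 1)))) * ((j + 1) * (N - K)) := by
      rw [h1, pow_succ]; ring
    rw [e1, e2]
    exact Nat.mul_le_mul_left _
      (Nat.mul_le_mul (by omega : K ≤ j + 1) (Nat.sub_le_sub_left hKj N))
  exact Nat.le_of_mul_le_mul_right key (Nat.succ_pos j)

private lemma bt_le_max {N K : ℕ} (hKN : K < N) :
    ∀ j, j ≤ N → bt N K j ≤ bt N K K := by
  have below : ∀ d, bt N K (K - d) ≤ bt N K K := by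
    intro d
    induction d with
    | zero => simp
    | succ d ih =>
      rcases le_or_gt K d with h | h
      · have : K - (d + 1) = K - d := by omega
        rw [this]; exact ih
      · have h2 : K - (d + 1) + 1 = K - d := by omega
        have := bt_step_up hKN (show K - (d + 1) < K by omega)
        rw [h2] at this
        exact this.trans ih
  have above : ∀ j, K ≤ j → j ≤ N → bt N K j ≤ bt N K K := by
    intro j
    induction j with
    | zero => intro h _; simp_all
    | succ j ih =>
      intro h hN
      rcases le_or_gt K j with h' | h'
      · exact (bt_step_down h' (by omega)).trans (ih h' (by omega))
      · have : K = j + 1 := by omega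
        rw [this]
  intro j hj
  rcases le_or_gt j K with h | h
  · have : j = K - (K - j) := by omega
    rw [this]; exact below _
  · exact above j h.le hj

private lemma choose_mul_le (N K : ℕ) (hK : K ≤ N) :
    N.choose K * (K ^ K * (N - K) ^ (N - K)) ≤ N ^ N := by
  rw [← bt_sum hK]
  exact Finset.single_le_sum (f := fun j => bt N K j) (fun i _ => Nat.zero_le _)
    (Finset.mem_range.mpr (by omega))

private lemma pow_le_choose_mul (N K : ℕ) (hKN : K < N) :
    N ^ N ≤ (N + 1) * (N.choose K * (K ^ K * (N - K) ^ (N - K))) := by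
  rw [← bt_sum hKN.le]
  calc ∑ j ∈ range (N + 1), bt N K j
      ≤ ∑ _j ∈ range (N + 1), bt N K K :=
        Finset.sum_le_sum fun j hj => bt_le_max hKN j (by simpa using Nat.lt_succ_iff.mp (Finset.mem_range.mp hj))
    _ = (N + 1) * bt N K K := by rw [Finset.sum_const, card_range, smul_eq_mul]
  -- bt N K K = choose * ...

open Real Filter

private lemma pow_eq_exp (a : ℝ) (n : ℕ) (ha : 0 < a) :
    a ^ n = Real.exp (n * Real.log a) := by
  rw [← Real.log_pow, Real.exp_log (by positivity)]

private lemma entropy_pow_eq (k₁ k₂ : ℕ) (h0 : 0 < k₁) (hk : k₁ < k₂) (m : ℕ) (hm : 0 < m) :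
    ((m : ℝ) * k₂) ^ (m * k₂) =
      Real.exp ((m : ℝ) * ((k₂ : ℝ) * Real.log k₂ - (k₁ : ℝ) * Real.log k₁
          - ((k₂ : ℝ) - k₁) * Real.log ((k₂ : ℝ) - k₁)))
        * (((m : ℝ) * k₁) ^ (m * k₁)
          * ((m : ℝ) * k₂ - (m : ℝ) * k₁) ^ (m * k₂ - m * k₁)) := by
  have hm' : (0 : ℝ) < m := by exact_mod_cast hm
  have hk₁' : (0 : ℝ) < k₁ := by exact_mod_cast h0
  have hk₂' : (0 : ℝ) < k₂ := by exact_mod_cast h0.trans hk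
  have hd : (0 : ℝ) < (k₂ : ℝ) - k₁ := by
    have : (k₁ : ℝ) < k₂ := by exact_mod_cast hk
    linarith
  have hsub : ((m * k₂ - m * k₁ : ℕ) : ℝ) = (m : ℝ) * ((k₂ : ℝ) - k₁) := by
    rw [Nat.cast_sub ((Nat.mul_lt_mul_left hm).mpr hk).le]; push_cast; ring
  have he : (m : ℝ) * k₂ - (m : ℝ) * k₁ = (m : ℝ) * ((k₂ : ℝ) - k₁) := by ring
  rw [pow_eq_exp _ _ (by positivity), pow_eq_exp _ _ (by positivity),
    he, pow_eq_exp _ _ (by positivity), ← Real.exp_add, ← Real.exp_add]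
  congr 1
  rw [Real.log_mul hm'.ne' hk₂'.ne', Real.log_mul hm'.ne' hk₁'.ne',
    Real.log_mul hm'.ne' hd.ne', hsub]
  push_cast
  ring

private lemma choose_upper (k₁ k₂ m : ℕ) (h0 : 0 < k₁) (hk : k₁ < k₂) (hm : 0 < m) :
    (((m * k₂).choose (m * k₁) : ℕ) : ℝ) ≤
      Real.exp ((m : ℝ) * ((k₂ : ℝ) * Real.log k₂ - (k₁ : ℝ) * Real.log k₁
          - ((k₂ : ℝ) - k₁) * Real.log ((k₂ : ℝ) - k₁))) := by
  have hKN : m * k₁ < m * k₂ := (Nat.mul_lt_mul_left hm).mpr hk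
  have hm' : (0 : ℝ) < m := by exact_mod_cast hm
  have hk₁' : (0 : ℝ) < k₁ := by exact_mod_cast h0
  have hlt : (k₁ : ℝ) < k₂ := by exact_mod_cast hk
  have hP : (0 : ℝ) < ((m : ℝ) * k₁) ^ (m * k₁)
      * ((m : ℝ) * k₂ - (m : ℝ) * k₁) ^ (m * k₂ - m * k₁) := by
    have : (0 : ℝ) < (m : ℝ) * k₂ - (m : ℝ) * k₁ := by nlinarith
    positivity
  have hc : ((m * k₂ - m * k₁ : ℕ) : ℝ) = (m : ℝ) * k₂ - (m : ℝ) * k₁ := by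
    rw [Nat.cast_sub hKN.le]; push_cast; ring
  have h1 : (((m * k₂).choose (m * k₁) : ℕ) : ℝ)
      * (((m * k₁ : ℕ) : ℝ) ^ (m * k₁) * ((m * k₂ - m * k₁ : ℕ) : ℝ) ^ (m * k₂ - m * k₁))
      ≤ ((m * k₂ : ℕ) : ℝ) ^ (m * k₂) := by
    exact_mod_cast choose_mul_le (m * k₂) (m * k₁) hKN.le
  rw [hc] at h1
  push_cast at h1
  rw [entropy_pow_eq k₁ k₂ h0 hk m hm] at h1
  exact le_of_mul_le_mul_right h1 hP

private lemma choose_lower (k₁ k₂ m : ℕ) (h0 : 0 < k₁) (hk : k₁ < k₂) (hm : 0 < m) :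
    Real.exp ((m : ℝ) * ((k₂ : ℝ) * Real.log k₂ - (k₁ : ℝ) * Real.log k₁
        - ((k₂ : ℝ) - k₁) * Real.log ((k₂ : ℝ) - k₁)))
      ≤ ((m : ℝ) * k₂ + 1) * (((m * k₂).choose (m * k₁) : ℕ) : ℝ) := by
  have hKN : m * k₁ < m * k₂ := (Nat.mul_lt_mul_left hm).mpr hk
  have hm' : (0 : ℝ) < m := by exact_mod_cast hm
  have hk₁' : (0 : ℝ) < k₁ := by exact_mod_cast h0
  have hlt : (k₁ : ℝ) < k₂ := by exact_mod_cast hk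
  have hP : (0 : ℝ) < ((m : ℝ) * k₁) ^ (m * k₁)
      * ((m : ℝ) * k₂ - (m : ℝ) * k₁) ^ (m * k₂ - m * k₁) := by
    have : (0 : ℝ) < (m : ℝ) * k₂ - (m : ℝ) * k₁ := by nlinarith
    positivity
  have hc : ((m * k₂ - m * k₁ : ℕ) : ℝ) = (m : ℝ) * k₂ - (m : ℝ) * k₁ := by
    rw [Nat.cast_sub hKN.le]; push_cast; ring
  have h1 : ((m * k₂ : ℕ) : ℝ) ^ (m * k₂)
      ≤ (((m * k₂ : ℕ) : ℝ) + 1) * ((((m * k₂).choose (m * k₁) : ℕ) : ℝ)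
        * (((m * k₁ : ℕ) : ℝ) ^ (m * k₁)
          * ((m * k₂ - m * k₁ : ℕ) : ℝ) ^ (m * k₂ - m * k₁))) := by
    exact_mod_cast pow_le_choose_mul (m * k₂) (m * k₁) hKN
  rw [hc] at h1
  push_cast at h1
  rw [entropy_pow_eq k₁ k₂ h0 hk m hm] at h1
  refine le_of_mul_le_mul_right ?_ hP
  calc Real.exp ((m : ℝ) * ((k₂ : ℝ) * Real.log k₂ - (k₁ : ℝ) * Real.log k₁
          - ((k₂ : ℝ) - k₁) * Real.log ((k₂ : ℝ) - k₁)))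
        * (((m : ℝ) * k₁) ^ (m * k₁) * ((m : ℝ) * k₂ - (m : ℝ) * k₁) ^ (m * k₂ - m * k₁))
      ≤ ((m : ℝ) * k₂ + 1) * ((((m * k₂).choose (m * k₁) : ℕ) : ℝ)
          * (((m : ℝ) * k₁) ^ (m * k₁)
            * ((m : ℝ) * k₂ - (m : ℝ) * k₁) ^ (m * k₂ - m * k₁))) := h1
    _ = ((m : ℝ) * k₂ + 1) * (((m * k₂).choose (m * k₁) : ℕ) : ℝ)
          * (((m : ℝ) * k₁) ^ (m * k₁)
            * ((m : ℝ) * k₂ - (m : ℝ) * k₁) ^ (m * k₂ - m * k₁)) := by ring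

private lemma tendsto_exp_div_linear (δ c : ℝ) (hδ : 0 < δ) (hc : 0 < c) :
    Tendsto (fun x : ℝ => Real.exp (δ * x) / (c * x + 1)) atTop atTop := by
  have t1 : Tendsto (fun x : ℝ => Real.exp x / x) atTop atTop := by
    simpa using Real.tendsto_exp_div_pow_atTop 1
  have t2 : Tendsto (fun x : ℝ => δ * x) atTop atTop :=
    Filter.Tendsto.const_mul_atTop hδ tendsto_id
  have t3 : Tendsto (fun x : ℝ => Real.exp (δ * x) / (δ * x)) atTop atTop := t1.comp t2
  have t4 : Tendsto (fun x : ℝ => (δ / (c + 1)) * (Real.exp (δ * x) / (δ * x))) atTop atTop :=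
    Filter.Tendsto.const_mul_atTop (by positivity) t3
  apply tendsto_atTop_mono' atTop ?_ t4
  filter_upwards [Filter.eventually_ge_atTop (1 : ℝ)] with x hx
  have hx0 : (0 : ℝ) < x := lt_of_lt_of_le one_pos hx
  have heq : (δ / (c + 1)) * (Real.exp (δ * x) / (δ * x))
      = Real.exp (δ * x) / ((c + 1) * x) := by
    field_simp
  rw [heq]
  gcongr
  nlinarith

private lemma summable_of_gt (k₁ k₂ : ℕ) (h0 : 0 < k₁) (hk : k₁ < k₂) (σ : ℝ)
    (hσ : (k₂ : ℝ) * Real.log k₂ - (k₁ : ℝ) * Real.log k₁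
        - ((k₂ : ℝ) - k₁) * Real.log ((k₂ : ℝ) - k₁) < (k₂ : ℝ) * Real.log 3 * σ) :
    Summable (fun n : ℕ => (Nat.choose ((n + 1) * k₂) ((n + 1) * k₁) : ℝ)
      * (3 : ℝ) ^ (-(k₂ : ℝ) * (n + 1) * σ)) := by
  have h3 : (0 : ℝ) < 3 := by norm_num
  set E : ℝ := (k₂ : ℝ) * Real.log k₂ - (k₁ : ℝ) * Real.log k₁
      - ((k₂ : ℝ) - k₁) * Real.log ((k₂ : ℝ) - k₁) with hE
  set r : ℝ := Real.exp (E - (k₂ : ℝ) * Real.log 3 * σ) with hr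
  have hr0 : (0 : ℝ) < r := Real.exp_pos _
  have hr1 : r < 1 := Real.exp_lt_one_iff.mpr (by linarith)
  refine Summable.of_nonneg_of_le (fun n => ?_) (fun n => ?_)
    ((summable_geometric_of_lt_one hr0.le hr1).mul_right r)
  · have h1 : (0 : ℝ) ≤ (3 : ℝ) ^ (-(k₂ : ℝ) * (n + 1) * σ) := Real.rpow_nonneg h3.le _
    positivity
  · have hC : ((((n + 1) * k₂).choose ((n + 1) * k₁) : ℕ) : ℝ)
        ≤ Real.exp (((n : ℝ) + 1) * E) := by
      have := choose_upper k₁ k₂ (n + 1) h0 hk (Nat.succ_pos n)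
      rw [show (((n + 1 : ℕ) : ℝ)) = (n : ℝ) + 1 by push_cast; ring] at this
      exact this
    have hpow : (3 : ℝ) ^ (-(k₂ : ℝ) * ((n : ℝ) + 1) * σ)
        = Real.exp (-(((n : ℝ) + 1) * ((k₂ : ℝ) * Real.log 3 * σ))) := by
      rw [Real.rpow_def_of_pos h3]; congr 1; ring
    have hgoal : r ^ n * r
        = Real.exp (((n : ℝ) + 1) * (E - (k₂ : ℝ) * Real.log 3 * σ)) := by
      rw [hr, ← Real.exp_nat_mul, ← Real.exp_add]; congr 1; ring
    rw [hpow, hgoal]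
    calc (Nat.choose ((n + 1) * k₂) ((n + 1) * k₁) : ℝ)
          * Real.exp (-(((n : ℝ) + 1) * ((k₂ : ℝ) * Real.log 3 * σ)))
        ≤ Real.exp (((n : ℝ) + 1) * E)
            * Real.exp (-(((n : ℝ) + 1) * ((k₂ : ℝ) * Real.log 3 * σ))) :=
          mul_le_mul_of_nonneg_right hC (Real.exp_pos _).le
      _ = Real.exp (((n : ℝ) + 1) * (E - (k₂ : ℝ) * Real.log 3 * σ)) := by
          rw [← Real.exp_add]; congr 1; ring

private lemma not_summable_of_lt (k₁ k₂ : ℕ) (h0 : 0 < k₁) (hk : k₁ < k₂) (σ : ℝ)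
    (hσ : (k₂ : ℝ) * Real.log 3 * σ < (k₂ : ℝ) * Real.log k₂ - (k₁ : ℝ) * Real.log k₁
        - ((k₂ : ℝ) - k₁) * Real.log ((k₂ : ℝ) - k₁)) :
    ¬ Summable (fun n : ℕ => (Nat.choose ((n + 1) * k₂) ((n + 1) * k₁) : ℝ)
      * (3 : ℝ) ^ (-(k₂ : ℝ) * (n + 1) * σ)) := by
  intro hsum
  have h3 : (0 : ℝ) < 3 := by norm_num
  have hk₂' : (0 : ℝ) < k₂ := by exact_mod_cast h0.trans hk
  set E : ℝ := (k₂ : ℝ) * Real.log k₂ - (k₁ : ℝ) * Real.log k₁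
      - ((k₂ : ℝ) - k₁) * Real.log ((k₂ : ℝ) - k₁) with hE
  set δ : ℝ := E - (k₂ : ℝ) * Real.log 3 * σ with hδdef
  have hδ : 0 < δ := by rw [hδdef]; linarith
  set f : ℕ → ℝ := fun n : ℕ => (Nat.choose ((n + 1) * k₂) ((n + 1) * k₁) : ℝ)
      * (3 : ℝ) ^ (-(k₂ : ℝ) * (n + 1) * σ) with hf
  have hb : ∀ n : ℕ, Real.exp (δ * ((n : ℝ) + 1)) / ((k₂ : ℝ) * ((n : ℝ) + 1) + 1) ≤ f n := by
    intro n
    have hC : Real.exp (((n : ℝ) + 1) * E)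
        ≤ (((n : ℝ) + 1) * k₂ + 1) * ((((n + 1) * k₂).choose ((n + 1) * k₁) : ℕ) : ℝ) := by
      have := choose_lower k₁ k₂ (n + 1) h0 hk (Nat.succ_pos n)
      rw [show (((n + 1 : ℕ) : ℝ)) = (n : ℝ) + 1 by push_cast; ring] at this
      exact this
    have hpow : (3 : ℝ) ^ (-(k₂ : ℝ) * ((n : ℝ) + 1) * σ)
        = Real.exp (-(((n : ℝ) + 1) * ((k₂ : ℝ) * Real.log 3 * σ))) := by
      rw [Real.rpow_def_of_pos h3]; congr 1; ring
    have hden : (0 : ℝ) < (k₂ : ℝ) * ((n : ℝ) + 1) + 1 := by positivity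
    rw [hf]
    simp only
    rw [hpow, div_le_iff₀ hden]
    calc Real.exp (δ * ((n : ℝ) + 1))
        = Real.exp (((n : ℝ) + 1) * E)
            * Real.exp (-(((n : ℝ) + 1) * ((k₂ : ℝ) * Real.log 3 * σ))) := by
          rw [← Real.exp_add]; congr 1; rw [hδdef]; ring
      _ ≤ (((n : ℝ) + 1) * k₂ + 1) * ((((n + 1) * k₂).choose ((n + 1) * k₁) : ℕ) : ℝ)
            * Real.exp (-(((n : ℝ) + 1) * ((k₂ : ℝ) * Real.log 3 * σ))) :=
          mul_le_mul_of_nonneg_right hC (Real.exp_pos _).le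
      _ = ((((n + 1) * k₂).choose ((n + 1) * k₁) : ℕ) : ℝ)
            * Real.exp (-(((n : ℝ) + 1) * ((k₂ : ℝ) * Real.log 3 * σ)))
            * ((k₂ : ℝ) * ((n : ℝ) + 1) + 1) := by ring
  have htends : Tendsto (fun n : ℕ => Real.exp (δ * ((n : ℝ) + 1))
      / ((k₂ : ℝ) * ((n : ℝ) + 1) + 1)) atTop atTop := by
    have hcomp := (tendsto_exp_div_linear δ (k₂ : ℝ) hδ hk₂').comp
      (tendsto_atTop_add_const_right atTop (1 : ℝ) tendsto_natCast_atTop_atTop)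
    exact hcomp
  have hftends : Tendsto f atTop atTop := tendsto_atTop_mono hb htends
  have hzero : Tendsto f atTop (nhds 0) := hsum.tendsto_atTop_zero
  have h1 := hftends.eventually_ge_atTop (1 : ℝ)
  have h2 := hzero.eventually_lt_const (by norm_num : (0 : ℝ) < 1)
  obtain ⟨n, hn1, hn2⟩ := (h1.and h2).exists
  linarith


/-- The abscissa of convergence of `∑_{n≥1} C(nk₂, nk₁) 3^{-k₂ns}` for coprime
`0 < k₁ < k₂` equals
`(1/(k₂ log 3)) · [k₁ log(k₂/k₁) + (k₂−k₁) log(k₂/(k₂−k₁))]`. -/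
theorem partition_zeta_abscissa (k₁ k₂ : ℕ) (h0 : 0 < k₁) (hk : k₁ < k₂)
    (hcop : Nat.Coprime k₁ k₂) :
    sInf {σ : ℝ | Summable (fun n : ℕ =>
        (Nat.choose ((n + 1) * k₂) ((n + 1) * k₁) : ℝ)
          * (3 : ℝ) ^ (-(k₂ : ℝ) * (n + 1) * σ))}
      = (1 / ((k₂ : ℝ) * Real.log 3)) *
          ((k₁ : ℝ) * Real.log ((k₂ : ℝ) / k₁)
            + ((k₂ : ℝ) - k₁) * Real.log ((k₂ : ℝ) / ((k₂ : ℝ) - k₁))) := by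
  have hL : 0 < Real.log 3 := Real.log_pos (by norm_num)
  have hk₁' : (0 : ℝ) < k₁ := by exact_mod_cast h0
  have hk₂' : (0 : ℝ) < k₂ := by exact_mod_cast h0.trans hk
  have hlt : (k₁ : ℝ) < k₂ := by exact_mod_cast hk
  have hd : (0 : ℝ) < (k₂ : ℝ) - k₁ := by linarith
  have hcLpos : (0 : ℝ) < (k₂ : ℝ) * Real.log 3 := by positivity
  set A : ℝ := (1 / ((k₂ : ℝ) * Real.log 3)) *
      ((k₁ : ℝ) * Real.log ((k₂ : ℝ) / k₁)
        + ((k₂ : ℝ) - k₁) * Real.log ((k₂ : ℝ) / ((k₂ : ℝ) - k₁))) with hAdef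
  set S : Set ℝ := {σ : ℝ | Summable (fun n : ℕ =>
      (Nat.choose ((n + 1) * k₂) ((n + 1) * k₁) : ℝ)
        * (3 : ℝ) ^ (-(k₂ : ℝ) * (n + 1) * σ))} with hSdef
  have hEA : (k₂ : ℝ) * Real.log 3 * A
      = (k₂ : ℝ) * Real.log k₂ - (k₁ : ℝ) * Real.log k₁
        - ((k₂ : ℝ) - k₁) * Real.log ((k₂ : ℝ) - k₁) := by
    rw [hAdef, Real.log_div hk₂'.ne' hk₁'.ne', Real.log_div hk₂'.ne' hd.ne']
    field_simp
    ring
  have hmem : ∀ σ : ℝ, A < σ → σ ∈ S := by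
    intro σ hσ
    refine summable_of_gt k₁ k₂ h0 hk σ ?_
    rw [← hEA]
    exact (mul_lt_mul_iff_right₀ hcLpos).mpr hσ
  have hlb : ∀ σ ∈ S, A ≤ σ := by
    intro σ hσ
    by_contra hcon
    push_neg at hcon
    refine not_summable_of_lt k₁ k₂ h0 hk σ ?_ hσ
    rw [← hEA]
    exact (mul_lt_mul_iff_right₀ hcLpos).mpr hcon
  apply le_antisymm
  · by_contra hcon
    push_neg at hcon
    have h1 : (A + sInf S) / 2 ∈ S := hmem _ (by linarith)
    have h2 : sInf S ≤ (A + sInf S) / 2 := csInf_le ⟨A, fun x hx => hlb x hx⟩ h1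
    linarith
  · exact le_csInf ⟨A + 1, hmem _ (by linarith)⟩ hlb
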